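/- Strong duality for the SPO loss: for any ĉ, c ∈ ℝ^d, ℓ_SPO(ĉ, c) = inf_{α ≥ 0} { ξ_S(c − αĉ) + α z*(ĉ) } − z*(c). -/

import Mathlib

open MeasureTheory Set

noncomputable section

/-- Dot product on `Fin d → ℝ`. -/
def dotp {d : ℕ} (c w : Fin d → ℝ) : ℝ := ∑ i, c i * w i

/-- Optimal value `z*(c) = min_{w ∈ S} cᵀw`. -/
def zS {d : ℕ} (S : Set (Fin d → ℝ)) (c : Fin d → ℝ) : ℝ := sInf ((fun w => dotp c w) '' S)

/-- Support function `ξ_S(c) = max_{w ∈ S} cᵀw`. -/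
def xiS {d : ℕ} (S : Set (Fin d → ℝ)) (c : Fin d → ℝ) : ℝ := sSup ((fun w => dotp c w) '' S)

/-- Optimal solution set `W*(c) = argmin_{w ∈ S} cᵀw`. -/
def WS {d : ℕ} (S : Set (Fin d → ℝ)) (c : Fin d → ℝ) : Set (Fin d → ℝ) :=
  {w | w ∈ S ∧ ∀ u ∈ S, dotp c w ≤ dotp c u}

/-- SPO loss `ℓ_SPO(ĉ, c) = max_{w ∈ W*(ĉ)} cᵀw − z*(c)`. -/
def lSPO {d : ℕ} (S : Set (Fin d → ℝ)) (chat c : Fin d → ℝ) : ℝ :=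
  sSup ((fun w => dotp c w) '' WS S chat) - zS S c

/-- SPO+ loss `ℓ_SPO+(ĉ, c) = ξ_S(c − 2ĉ) + 2ĉᵀw*(c) − z*(c)` given a selection `wstar`. -/
def lSPOp {d : ℕ} (S : Set (Fin d → ℝ)) (wstar : (Fin d → ℝ) → (Fin d → ℝ))
    (chat c : Fin d → ℝ) : ℝ :=
  xiS S (c - (2 : ℝ) • chat) + 2 * dotp chat (wstar c) - zS S c

open Filter Topology in
lemma dotp_cont {d : ℕ} (c : Fin d → ℝ) : Continuous (dotp c) := by
  unfold dotp
  exact continuous_finset_sum _ fun i _ => continuous_const.mul (continuous_apply i)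

lemma dotp_sub_smul {d : ℕ} (c chat w : Fin d → ℝ) (α : ℝ) :
    dotp (c - α • chat) w = dotp c w - α * dotp chat w := by
  simp [dotp, sub_mul, Finset.sum_sub_distrib, Finset.mul_sum, mul_assoc]

open Filter Topology in
/-- strong duality for the SPO loss:
`ℓ_SPO(ĉ, c) = inf_{α ≥ 0} { ξ_S(c − αĉ) + α z*(ĉ) } − z*(c)`. -/
theorem spo_loss_strong_duality {d : ℕ} (S : Set (Fin d → ℝ))
    (hS : S.Nonempty) (hSc : IsCompact S) (hScv : Convex ℝ S)
    (chat c : Fin d → ℝ) :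
    lSPO S chat c =
      sInf ((fun α : ℝ => xiS S (c - α • chat) + α * zS S chat) '' Set.Ici (0 : ℝ)) -
        zS S c := by
  clear hScv
  -- basic boundedness facts
  have hbddA : ∀ v : Fin d → ℝ, BddAbove ((fun w => dotp v w) '' S) := fun v =>
    ((hSc.image (dotp_cont v)).bddAbove)
  have hbddB : ∀ v : Fin d → ℝ, BddBelow ((fun w => dotp v w) '' S) := fun v =>
    ((hSc.image (dotp_cont v)).bddBelow)
  have hzle : ∀ u ∈ S, zS S chat ≤ dotp chat u := fun u hu =>
    csInf_le (hbddB chat) (mem_image_of_mem _ hu)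
  -- xi attained and xi is an upper bound
  have hxi_ub : ∀ (v : Fin d → ℝ) (u : _), u ∈ S → dotp v u ≤ xiS S v := fun v u hu =>
    le_csSup (hbddA v) (mem_image_of_mem _ hu)
  have hxi_att : ∀ v : Fin d → ℝ, ∃ u ∈ S, xiS S v = dotp v u := by
    intro v
    obtain ⟨u, huS, hmax⟩ := hSc.exists_isMaxOn hS (dotp_cont v).continuousOn
    refine ⟨u, huS, le_antisymm ?_ (hxi_ub v u huS)⟩
    exact csSup_le (hS.image _) (by rintro x ⟨y, hy, rfl⟩; exact hmax hy)
  -- characterization of WS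
  have hWS_iff : ∀ w, w ∈ WS S chat ↔ w ∈ S ∧ dotp chat w ≤ zS S chat := by
    intro w
    constructor
    · rintro ⟨hwS, hmin⟩
      exact ⟨hwS, le_csInf (hS.image _) (by rintro x ⟨y, hy, rfl⟩; exact hmin y hy)⟩
    · rintro ⟨hwS, hle⟩
      exact ⟨hwS, fun u hu => hle.trans (hzle u hu)⟩
  have hWq : ∀ w ∈ WS S chat, dotp chat w = zS S chat := by
    intro w hw
    exact le_antisymm ((hWS_iff w).1 hw).2 (hzle w ((hWS_iff w).1 hw).1)
  -- WS nonempty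
  have hWne : (WS S chat).Nonempty := by
    obtain ⟨w, hwS, hmin⟩ := hSc.exists_isMinOn hS (dotp_cont chat).continuousOn
    exact ⟨w, hwS, fun u hu => hmin hu⟩
  have hWsub : WS S chat ⊆ S := fun w hw => hw.1
  -- M := optimal primal value
  set M : ℝ := sSup ((fun w => dotp c w) '' WS S chat) with hM
  have hbddW : BddAbove ((fun w => dotp c w) '' WS S chat) :=
    (hbddA c).mono (image_mono hWsub)
  have hMub : ∀ w ∈ WS S chat, dotp c w ≤ M := fun w hw =>
    le_csSup hbddW (mem_image_of_mem _ hw)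
  -- the dual function
  set g : ℝ → ℝ := fun α => xiS S (c - α • chat) + α * zS S chat with hg
  -- weak duality : M ≤ g α for α ≥ 0
  have hweak : ∀ α : ℝ, 0 ≤ α → M ≤ g α := by
    intro α hα
    refine csSup_le (hWne.image _) ?_
    rintro x ⟨w, hw, rfl⟩
    have h1 : dotp (c - α • chat) w ≤ xiS S (c - α • chat) := hxi_ub _ w (hWsub hw)
    rw [dotp_sub_smul] at h1
    have h2 : dotp chat w = zS S chat := hWq w hw
    simp only [hg]
    nlinarith
  have hIne : (g '' Set.Ici (0 : ℝ)).Nonempty :=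
    ⟨g 0, mem_image_of_mem _ (mem_Ici.2 le_rfl)⟩
  have hIbdd : BddBelow (g '' Set.Ici (0 : ℝ)) := by
    refine ⟨M, ?_⟩
    rintro x ⟨α, hα, rfl⟩
    exact hweak α hα
  -- M ≤ sInf
  have hle1 : M ≤ sInf (g '' Set.Ici (0 : ℝ)) := by
    refine le_csInf hIne ?_
    rintro x ⟨α, hα, rfl⟩
    exact hweak α hα
  -- hard direction: sInf ≤ M
  have hle2 : sInf (g '' Set.Ici (0 : ℝ)) ≤ M := by
    refine le_of_forall_pos_le_add ?_
    intro ε hε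
    by_contra hcon
    push_neg at hcon
    have hgn : ∀ n : ℕ, M + ε < g (n : ℝ) := by
      intro n
      refine lt_of_lt_of_le hcon (csInf_le hIbdd ?_)
      exact mem_image_of_mem _ (mem_Ici.2 (Nat.cast_nonneg n))
    -- choose maximizers
    have hch : ∀ n : ℕ, ∃ u ∈ S, xiS S (c - (n : ℝ) • chat) = dotp (c - (n : ℝ) • chat) u :=
      fun n => hxi_att _
    choose w hwS hwmax using hch
    set q : ℕ → ℝ := fun n => dotp chat (w n) - zS S chat with hq
    have hq0 : ∀ n, 0 ≤ q n := fun n => sub_nonneg.2 (hzle _ (hwS n))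
    have hgval : ∀ n : ℕ, g (n : ℝ) = dotp c (w n) - (n : ℝ) * q n := by
      intro n
      simp only [hg, hwmax n, dotp_sub_smul, hq]
      ring
    have haB : ∀ n, dotp c (w n) ≤ xiS S c := fun n => hxi_ub c _ (hwS n)
    have hnq : ∀ n : ℕ, (n : ℝ) * q n ≤ xiS S c - M - ε := by
      intro n
      have h1 := hgn n
      rw [hgval n] at h1
      have := haB n
      linarith
    have hage : ∀ n : ℕ, M + ε ≤ dotp c (w n) := by
      intro n
      have h1 := hgn n
      rw [hgval n] at h1
      have h2 : 0 ≤ (n : ℝ) * q n := mul_nonneg (Nat.cast_nonneg n) (hq0 n)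
      linarith
    have hC : (0:ℝ) ≤ xiS S c - M - ε := by
      have := hnq 0
      have h2 : (0:ℝ) * q 0 = 0 := by ring
      simp only [Nat.cast_zero] at this
      linarith
    -- convergent subsequence
    obtain ⟨wlim, hwlimS, φ, hφmono, hφtend⟩ := hSc.tendsto_subseq hwS
    -- q (φ n) → 0
    have hqtend0 : Tendsto (fun n => q (φ n)) atTop (𝓝 0) := by
      refine squeeze_zero' (Eventually.of_forall fun n => hq0 _) ?_
        (tendsto_const_div_atTop_nhds_zero_nat (xiS S c - M - ε))
      filter_upwards [eventually_ge_atTop 1] with n hn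
      have hφge : (n : ℝ) ≤ (φ n : ℝ) := by exact_mod_cast hφmono.le_apply
      have hnpos : (0:ℝ) < (n : ℝ) := by exact_mod_cast hn
      have hφpos : (0:ℝ) < (φ n : ℝ) := lt_of_lt_of_le hnpos hφge
      have h1 : ((φ n : ℝ)) * q (φ n) ≤ xiS S c - M - ε := hnq (φ n)
      have h3 : q (φ n) ≤ (xiS S c - M - ε) / (φ n : ℝ) := by
        rw [le_div_iff₀ hφpos]; linarith [h1]
      refine h3.trans ?_
      gcongr
    -- q (φ n) → dotp chat wlim - zS
    have hqtend : Tendsto (fun n => q (φ n)) atTop (𝓝 (dotp chat wlim - zS S chat)) := by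
      have h1 : Tendsto (fun n => dotp chat (w (φ n))) atTop (𝓝 (dotp chat wlim)) :=
        ((dotp_cont chat).tendsto wlim).comp hφtend
      exact h1.sub_const _
    have hqeq : dotp chat wlim - zS S chat = 0 := tendsto_nhds_unique hqtend hqtend0
    have hwlimW : wlim ∈ WS S chat := (hWS_iff wlim).2 ⟨hwlimS, by linarith⟩
    have hctend : Tendsto (fun n => dotp c (w (φ n))) atTop (𝓝 (dotp c wlim)) :=
      ((dotp_cont c).tendsto wlim).comp hφtend
    have hge : M + ε ≤ dotp c wlim := ge_of_tendsto' hctend fun n => hage (φ n)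
    have := hMub wlim hwlimW
    linarith
  rw [show lSPO S chat c = M - zS S c from rfl, le_antisymm hle1 hle2]
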